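/- If dₙ₊₁ = 2dₙ + cₙ and cₙ₊₁ = 3dₙ + 2cₙ with d₁ = 7, c₁ = 1, then 3dₙ² - cₙ² = 146 for all n ≥ 1; in particular the equation 3d² - c² = 146 has infinitely many integer solutions. -/
import Mathlib


/-- The recurrence `dₙ₊₁ = 2dₙ + cₙ`, `cₙ₊₁ = 3dₙ + 2cₙ` with `d₁ = 7`,
`c₁ = 1` satisfies `3dₙ² - cₙ² = 146` for all `n ≥ 1`; in particular
`3d² - c² = 146` has infinitely many integer solutions. -/
theorem pell_like_recurrence (d c : ℕ → ℤ) (hd1 : d 1 = 7) (hc1 : c 1 = 1)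
    (hrec : ∀ n, 1 ≤ n → d (n + 1) = 2 * d n + c n ∧ c (n + 1) = 3 * d n + 2 * c n) :
    (∀ n, 1 ≤ n → 3 * (d n) ^ 2 - (c n) ^ 2 = 146) ∧
    {p : ℤ × ℤ | 3 * p.1 ^ 2 - p.2 ^ 2 = 146}.Infinite := by
  have key : ∀ n, 1 ≤ n → 3 * (d n) ^ 2 - (c n) ^ 2 = 146 ∧ 7 ≤ d n ∧ 1 ≤ c n := by
    intro n hn
    induction n with
    | zero => omega
    | succ k ih =>
      by_cases hk : 1 ≤ k
      · obtain ⟨h1, h2, h3⟩ := ih hk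
        obtain ⟨hd, hc⟩ := hrec k hk
        rw [hd, hc]
        refine ⟨by nlinarith, by nlinarith, by nlinarith⟩
      · have : k = 0 := by omega
        subst this
        rw [hd1, hc1]; norm_num
  have hmono : StrictMono (fun n : ℕ => d (n + 1)) := by
    apply strictMono_nat_of_lt_succ
    intro n
    obtain ⟨hd, _⟩ := hrec (n + 1) (by omega)
    obtain ⟨_, h2, h3⟩ := key (n + 1) (by omega)
    rw [hd]; linarith
  refine ⟨fun n hn => (key n hn).1, ?_⟩
  apply Set.infinite_of_injective_forall_mem
    (f := fun n : ℕ => ((d (n + 1), c (n + 1)) : ℤ × ℤ))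
  · intro a b hab
    exact hmono.injective (congrArg Prod.fst hab)
  · intro n
    exact (key (n + 1) (by omega)).1
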